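/- For β ∈ (0,1) define f(ζ;β) := ζ + (8/π)·tan²(πβ/2)·sinh(πζ/2)/( cos(πβ/2) + cosh(πζ/2) ). Then there exists ξ ∈ ℝ with Re ∂_ζ f(ξ + i; β) < 0 if and only if β > arccos(1 − √2)/π. -/

import Mathlib

open Set

/-- The conformal map of the explicit zero-gravity solitary wave of
Crowdy–Nelson–Krishnamurthy. -/
noncomputable def fCNK (β : ℝ) (z : ℂ) : ℂ :=
  z + ((8 / Real.pi * Real.tan (Real.pi * β / 2) ^ 2 : ℝ) : ℂ) *
    Complex.sinh ((Real.pi : ℂ) * z / 2) /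
      (((Real.cos (Real.pi * β / 2) : ℝ) : ℂ) + Complex.cosh ((Real.pi : ℂ) * z / 2))

private lemma fCNK_hasDerivAt (β : ℝ) (z : ℂ)
    (hne : ((Real.cos (Real.pi*β/2) : ℝ) : ℂ) + Complex.cosh ((Real.pi:ℂ)*z/2) ≠ 0) :
    HasDerivAt (fCNK β)
      (1 + (((8 / Real.pi * Real.tan (Real.pi * β / 2) ^ 2 : ℝ) : ℂ) *
          (Complex.cosh ((Real.pi:ℂ)*z/2) * ((Real.pi:ℂ)/2)) *
          (((Real.cos (Real.pi*β/2):ℝ):ℂ) + Complex.cosh ((Real.pi:ℂ)*z/2))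
        - ((8 / Real.pi * Real.tan (Real.pi * β / 2) ^ 2 : ℝ) : ℂ) *
          Complex.sinh ((Real.pi:ℂ)*z/2) *
          (Complex.sinh ((Real.pi:ℂ)*z/2) * ((Real.pi:ℂ)/2))) /
        (((Real.cos (Real.pi*β/2):ℝ):ℂ) + Complex.cosh ((Real.pi:ℂ)*z/2))^2) z := by
  have hin : HasDerivAt (fun w : ℂ => (Real.pi:ℂ)*w/2) ((Real.pi:ℂ)/2) z := by
    simpa using ((hasDerivAt_id z).const_mul (Real.pi:ℂ)).div_const 2
  have hs : HasDerivAt (fun w : ℂ => Complex.sinh ((Real.pi:ℂ)*w/2))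
      (Complex.cosh ((Real.pi:ℂ)*z/2) * ((Real.pi:ℂ)/2)) z :=
    (Complex.hasDerivAt_sinh _).comp z hin
  have hcd : HasDerivAt (fun w : ℂ => ((Real.cos (Real.pi*β/2):ℝ):ℂ) + Complex.cosh ((Real.pi:ℂ)*w/2))
      (Complex.sinh ((Real.pi:ℂ)*z/2) * ((Real.pi:ℂ)/2)) z := by
    simpa using ((Complex.hasDerivAt_cosh _).comp z hin).const_add (((Real.cos (Real.pi*β/2):ℝ):ℂ))
  have hnum := hs.const_mul ((8 / Real.pi * Real.tan (Real.pi * β / 2) ^ 2 : ℝ) : ℂ)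
  have h := (hasDerivAt_id z).add (hnum.div hcd hne)
  have hfun : fCNK β = fun w => w + ((8 / Real.pi * Real.tan (Real.pi * β / 2) ^ 2 : ℝ) : ℂ) *
    Complex.sinh ((Real.pi : ℂ) * w / 2) /
      (((Real.cos (Real.pi * β / 2) : ℝ) : ℂ) + Complex.cosh ((Real.pi : ℂ) * w / 2)) := rfl
  rw [hfun]
  exact h

private lemma cosh_eval (ξ : ℝ) :
    Complex.cosh ((Real.pi:ℂ)*((ξ:ℂ) + Complex.I)/2) = ((Real.sinh (Real.pi*ξ/2) : ℝ):ℂ) * Complex.I := by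
  have h : (Real.pi:ℂ)*((ξ:ℂ) + Complex.I)/2 = ((Real.pi*ξ/2:ℝ):ℂ) + ((Real.pi/2 : ℝ):ℂ)*Complex.I := by
    push_cast; ring
  rw [h, Complex.cosh_add, Complex.cosh_mul_I, Complex.sinh_mul_I,
    ← Complex.ofReal_cos, ← Complex.ofReal_sin, Real.cos_pi_div_two, Real.sin_pi_div_two,
    ← Complex.ofReal_sinh]
  simp

private lemma sinh_eval (ξ : ℝ) :
    Complex.sinh ((Real.pi:ℂ)*((ξ:ℂ) + Complex.I)/2) = ((Real.cosh (Real.pi*ξ/2) : ℝ):ℂ) * Complex.I := by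
  have h : (Real.pi:ℂ)*((ξ:ℂ) + Complex.I)/2 = ((Real.pi*ξ/2:ℝ):ℂ) + ((Real.pi/2 : ℝ):ℂ)*Complex.I := by
    push_cast; ring
  rw [h, Complex.sinh_add, Complex.cosh_mul_I, Complex.sinh_mul_I,
    ← Complex.ofReal_cos, ← Complex.ofReal_sin, Real.cos_pi_div_two, Real.sin_pi_div_two,
    ← Complex.ofReal_cosh]
  simp

private lemma deriv_re (β ξ : ℝ) (hc : 0 < Real.cos (Real.pi*β/2)) :
    (deriv (fCNK β) ((ξ:ℂ) + Complex.I)).re =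
      1 + 4 * Real.tan (Real.pi*β/2)^2 *
        ((Real.cos (Real.pi*β/2)^2 - Real.sinh (Real.pi*ξ/2)^2
            + 2*Real.cos (Real.pi*β/2)^2*Real.sinh (Real.pi*ξ/2)^2)
          / ((Real.cos (Real.pi*β/2)^2 + Real.sinh (Real.pi*ξ/2)^2)^2)) := by
  set c := Real.cos (Real.pi*β/2) with hcdef
  set S := Real.sinh (Real.pi*ξ/2) with hSdef
  set C := Real.cosh (Real.pi*ξ/2) with hCdef
  set t := Real.tan (Real.pi*β/2) ^ 2 with htdef
  have hne : ((c : ℝ) : ℂ) + Complex.cosh ((Real.pi:ℂ)*((ξ:ℂ)+Complex.I)/2) ≠ 0 := by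
    rw [cosh_eval, ← hSdef]
    intro h
    have h2 := congrArg Complex.re h
    simp only [Complex.add_re, Complex.ofReal_re, Complex.mul_re, Complex.I_re, Complex.I_im,
      Complex.ofReal_im, Complex.zero_re, mul_zero, zero_mul, mul_one, sub_zero, zero_sub] at h2
    have : c = 0 := by linarith
    exact hc.ne' this
  have hden : ((c:ℝ):ℂ) + ((S:ℝ):ℂ)*Complex.I ≠ 0 := by
    rw [cosh_eval, ← hSdef] at hne; exact hne
  have hpi : (Real.pi : ℂ) ≠ 0 := by exact_mod_cast Real.pi_ne_zero
  have hr : C^2 = 1 + S^2 := by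
    have h3 := Real.cosh_sq_sub_sinh_sq (Real.pi*ξ/2)
    rw [← hSdef, ← hCdef] at h3; linarith
  have hC2 : ((C:ℝ):ℂ)^2 = 1 + ((S:ℝ):ℂ)^2 := by exact_mod_cast congrArg (Complex.ofReal) hr
  have hKpi : ((8/Real.pi*t:ℝ):ℂ)*((Real.pi:ℂ)/2) = ((4*t:ℝ):ℂ) := by
    push_cast; field_simp; ring
  have hd : deriv (fCNK β) ((ξ:ℂ)+Complex.I)
      = 1 + ((4*t:ℝ):ℂ) * ((1 + Complex.I*((c*S:ℝ):ℂ)) / (((c:ℝ):ℂ) + ((S:ℝ):ℂ)*Complex.I)^2) := by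
    have hcs : ((c*S:ℝ):ℂ) = ((c:ℝ):ℂ)*((S:ℝ):ℂ) := by push_cast; ring
    rw [(fCNK_hasDerivAt β _ hne).deriv, cosh_eval, sinh_eval, ← hSdef, ← hCdef, ← htdef, ← hcdef,
      mul_div_assoc']
    linear_combination
      (((((S:ℝ):ℂ)*Complex.I)*(((c:ℝ):ℂ)+((S:ℝ):ℂ)*Complex.I) - ((C:ℝ):ℂ)^2*Complex.I^2)
          * (((((c:ℝ):ℂ)+((S:ℝ):ℂ)*Complex.I)^2)⁻¹)) * hKpi
      + ((-(((4*t:ℝ):ℂ))*Complex.I^2) * (((((c:ℝ):ℂ)+((S:ℝ):ℂ)*Complex.I)^2)⁻¹)) * hC2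
      + ((-(((4*t:ℝ):ℂ))*Complex.I) * (((((c:ℝ):ℂ)+((S:ℝ):ℂ)*Complex.I)^2)⁻¹)) * hcs
      + ((-(((4*t:ℝ):ℂ))) * (((((c:ℝ):ℂ)+((S:ℝ):ℂ)*Complex.I)^2)⁻¹)) * Complex.I_sq
  have hsq : (((c:ℝ):ℂ) + ((S:ℝ):ℂ)*Complex.I)^2
      = ((c^2-S^2:ℝ):ℂ) + ((2*c*S:ℝ):ℂ)*Complex.I := by
    push_cast
    linear_combination (((S:ℝ):ℂ)^2) * Complex.I_sq
  have hre : ((1 + Complex.I*((c*S:ℝ):ℂ)) / (((c:ℝ):ℂ)+((S:ℝ):ℂ)*Complex.I)^2).re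
      = (c^2 - S^2 + 2*c^2*S^2)/((c^2+S^2)^2) := by
    rw [hsq, Complex.div_re]
    have h1 : (1 + Complex.I*((c*S:ℝ):ℂ)).re = 1 := by simp
    have h2 : (1 + Complex.I*((c*S:ℝ):ℂ)).im = c*S := by simp
    have h3 : (((c^2-S^2:ℝ):ℂ) + ((2*c*S:ℝ):ℂ)*Complex.I).re = c^2-S^2 := by
      simp only [Complex.add_re, Complex.ofReal_re, Complex.mul_I_re, Complex.ofReal_im,
        neg_zero, add_zero]
    have h4 : (((c^2-S^2:ℝ):ℂ) + ((2*c*S:ℝ):ℂ)*Complex.I).im = 2*c*S := by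
      simp only [Complex.add_im, Complex.ofReal_im, Complex.mul_I_im, Complex.ofReal_re,
        zero_add]
    have h5 : Complex.normSq (((c^2-S^2:ℝ):ℂ) + ((2*c*S:ℝ):ℂ)*Complex.I) = (c^2+S^2)^2 := by
      rw [Complex.normSq_add_mul_I]
      ring
    rw [h1, h2, h3, h4, h5]
    ring
  rw [hd, Complex.add_re, Complex.one_re]
  simp only [Complex.mul_re, Complex.ofReal_re, Complex.ofReal_im, zero_mul, sub_zero]
  rw [hre]

private lemma P_nonneg {a u : ℝ} (ha : 0 < a) (ha1 : a < 1)
    (hcond : 2*a^2 - 4*a + 1 ≤ 0) (hu : 0 ≤ u) :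
    0 ≤ a*(a+u)^2 + 4*(1-a)*(a + (2*a-1)*u) := by
  nlinarith [sq_nonneg (2*a*u - 6*a^2 + 12*a - 4),
    mul_nonneg (sq_nonneg (a-1)) (by linarith : (0:ℝ) ≤ -(2*a^2-4*a+1)), sq_nonneg (a-1)]

private lemma cond_iff (β : ℝ) (hβ : β ∈ Ioo (0:ℝ) 1) (hc1 : Real.cos (Real.pi*β/2) < 1):
    (Real.arccos (1 - Real.sqrt 2) / Real.pi < β) ↔
      0 < 2*(Real.cos (Real.pi*β/2)^2)^2 - 4*(Real.cos (Real.pi*β/2)^2) + 1 := by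
  obtain ⟨hβ0, hβ1⟩ := hβ
  have hπ := Real.pi_pos
  set c := Real.cos (Real.pi*β/2) with hcdef
  have hs0 : (0:ℝ) ≤ 2 := by norm_num
  have hsq2 : Real.sqrt 2 ^ 2 = 2 := Real.sq_sqrt hs0
  have hs1 : (1:ℝ) ≤ Real.sqrt 2 := by nlinarith [Real.sqrt_nonneg 2]
  have hs2 : Real.sqrt 2 ≤ 2 := by nlinarith [Real.sqrt_nonneg 2]
  have hm1 : (-1:ℝ) ≤ 1 - Real.sqrt 2 := by linarith
  have hm2 : (1 - Real.sqrt 2 : ℝ) ≤ 1 := by linarith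
  have harc_mem : Real.arccos (1 - Real.sqrt 2) ∈ Icc 0 Real.pi :=
    ⟨Real.arccos_nonneg _, Real.arccos_le_pi _⟩
  have hβπ_mem : Real.pi * β ∈ Icc 0 Real.pi := by
    constructor
    · positivity
    · nlinarith
  have step1 : (Real.arccos (1 - Real.sqrt 2) / Real.pi < β) ↔
      Real.arccos (1 - Real.sqrt 2) < Real.pi * β := by
    rw [div_lt_iff₀ hπ]; rw [mul_comm]
  have step2 : (Real.arccos (1 - Real.sqrt 2) < Real.pi * β) ↔
      Real.cos (Real.pi * β) < 1 - Real.sqrt 2 := by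
    have h := Real.strictAntiOn_cos.lt_iff_gt hβπ_mem harc_mem
    rw [Real.cos_arccos hm1 hm2] at h
    exact h.symm
  have hdouble : Real.cos (Real.pi * β) = 2*c^2 - 1 := by
    have : Real.pi * β = 2 * (Real.pi*β/2) := by ring
    rw [this, Real.cos_two_mul]
  have hcge : (-1:ℝ) ≤ c := Real.neg_one_le_cos _
  have hc0 : c^2 ≤ 1 := by nlinarith
  rw [step1, step2, hdouble]
  constructor
  · intro h
    nlinarith [Real.sqrt_nonneg 2]
  · intro h
    have hd2 : 2 < (2 - 2*c^2)^2 := by nlinarith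
    have hdpos : 0 ≤ 2 - 2*c^2 := by nlinarith
    nlinarith [Real.sqrt_nonneg 2]

theorem statement17 (β : ℝ) (hβ : β ∈ Ioo (0 : ℝ) 1) :
    (∃ ξ : ℝ, (deriv (fCNK β) ((ξ : ℂ) + Complex.I)).re < 0) ↔
      Real.arccos (1 - Real.sqrt 2) / Real.pi < β := by
  obtain ⟨hβ0, hβ1⟩ := hβ
  have hπ := Real.pi_pos
  set c := Real.cos (Real.pi*β/2) with hcdef
  have hθ0 : 0 < Real.pi*β/2 := by positivity
  have hθ1 : Real.pi*β/2 < Real.pi/2 := by nlinarith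
  have hc : 0 < c := Real.cos_pos_of_mem_Ioo ⟨by linarith, hθ1⟩
  have hc1 : c < 1 := by
    have h := Real.strictAntiOn_cos ⟨le_refl 0, Real.pi_pos.le⟩
      ⟨le_of_lt hθ0, by linarith⟩ hθ0
    simpa using h
  obtain ⟨a, hadef⟩ : ∃ x, c^2 = x := ⟨c^2, rfl⟩
  have ha : 0 < a := by rw [← hadef]; positivity
  have ha1 : a < 1 := by rw [← hadef]; nlinarith
  have ht : Real.tan (Real.pi*β/2)^2 = (1-a)/a := by
    rw [Real.tan_eq_sin_div_cos, div_pow, Real.sin_sq, ← hcdef, hadef]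
  -- R(ξ) rewritten via P
  have hR : ∀ ξ : ℝ, (deriv (fCNK β) ((ξ:ℂ) + Complex.I)).re =
      (a*(a + Real.sinh (Real.pi*ξ/2)^2)^2
        + 4*(1-a)*(a + (2*a-1)*Real.sinh (Real.pi*ξ/2)^2))
      / (a * (a + Real.sinh (Real.pi*ξ/2)^2)^2) := by
    intro ξ
    rw [deriv_re β ξ hc, ht, ← hcdef, hadef]
    set S := Real.sinh (Real.pi*ξ/2)
    have hden : (0:ℝ) < a + S^2 := by positivity
    rw [eq_div_iff (by positivity : (a*(a+S^2)^2:ℝ) ≠ 0)]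
    field_simp
    ring
  rw [cond_iff β ⟨hβ0, hβ1⟩ hc1, ← hcdef, hadef]
  constructor
  · -- exists → condition, by contraposition
    rintro ⟨ξ, hξ⟩
    by_contra hcon
    push_neg at hcon
    rw [hR ξ] at hξ
    set S := Real.sinh (Real.pi*ξ/2)
    have hden : 0 < a * (a + S^2)^2 := by positivity
    have hnum := P_nonneg ha ha1 hcon (sq_nonneg S)
    have : 0 ≤ (a*(a+S^2)^2 + 4*(1-a)*(a + (2*a-1)*S^2)) / (a*(a+S^2)^2) :=
      div_nonneg hnum (le_of_lt hden)
    linarith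
  · -- condition → exists
    intro hcond
    set u : ℝ := (3*a^2 - 6*a + 2)/a with hudef
    have hu3 : 0 < 3*a^2 - 6*a + 2 := by nlinarith
    have hu : 0 < u := by positivity
    obtain ⟨y, hy⟩ := Real.sinh_surjective (Real.sqrt u)
    refine ⟨2*y/Real.pi, ?_⟩
    have harg : Real.pi*(2*y/Real.pi)/2 = y := by field_simp
    rw [hR, harg, hy, Real.sq_sqrt (le_of_lt hu)]
    apply div_neg_of_neg_of_pos
    · have hau : a * u = 3*a^2 - 6*a + 2 := by rw [hudef]; field_simp
      have key : a * (a*(a+u)^2 + 4*(1-a)*(a + (2*a-1)*u)) < 0 := by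
        have expand : a * (a*(a+u)^2 + 4*(1-a)*(a + (2*a-1)*u))
            = (a^2 + a*u)^2 + 4*(1-a)*(a^2 + (2*a-1)*(a*u)) := by ring
        rw [expand, hau]
        nlinarith [sq_nonneg (a-1)]
      nlinarith
    · positivity
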